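/- Let k be a field of characteristic p > 0, let f ∈ k[[t₁,t₂]] be a formal power series not divisible by t₁, and write f(t₁,t₂) = t₂^e·u(t₂) + t₁·h(t₁,t₂) where u(t₂) ∈ k[[t₂]] is a unit and e ≥ 1. Let α₁ = a₁·u^{k₁} and α₂ = a₂·u^{k₂} in k[[u]] with a₁, a₂ units and k₁, k₂ ≥ 1. Then for all sufficiently large n, the u-adic valuation of f(α₁^{p^n}, α₂) equals e·k₂; in particular dim_k(k[[u]]/(f(α₁^{p^n},α₂))) = e·k₂ is bounded independently of n. -/

import Mathlib

open PowerSeries Filter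

/-- Substitution of two one-variable power series (with zero constant term) into a
two-variable power series, defined coefficientwise. -/
noncomputable def substPair {k : Type*} [Field k] (a₀ a₁ : PowerSeries k)
    (f : MvPowerSeries (Fin 2) k) : PowerSeries k :=
  PowerSeries.mk fun j =>
    ∑ d ∈ Finset.range (j + 1) ×ˢ Finset.range (j + 1),
      (MvPowerSeries.coeff (Finsupp.single (0 : Fin 2) d.1 + Finsupp.single (1 : Fin 2) d.2) f)
        * PowerSeries.coeff j (a₀ ^ d.1 * a₁ ^ d.2)

/-- The embedding of a one-variable power series `u(t₂)` as a two-variable power series. -/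
noncomputable def toMv {k : Type*} [Field k] (u : PowerSeries k) : MvPowerSeries (Fin 2) k :=
  fun d => if d 0 = 0 then PowerSeries.coeff (d 1) u else 0

lemma finrank_quot_span_X_pow (k : Type*) [Field k] (m : ℕ) :
    Module.finrank k (PowerSeries k ⧸ Ideal.span {(PowerSeries.X : PowerSeries k) ^ m}) = m := by
  set I : Ideal (PowerSeries k) := Ideal.span {(PowerSeries.X : PowerSeries k) ^ m} with hI
  let φ : Polynomial k →ₐ[k] PowerSeries k ⧸ I :=
    (Ideal.Quotient.mkₐ k I).comp (Polynomial.coeToPowerSeries.algHom k)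
  have hφ : ∀ q : Polynomial k, φ q = Ideal.Quotient.mk I (q : PowerSeries k) := by
    intro q
    show Ideal.Quotient.mkₐ k I (Polynomial.coeToPowerSeries.algHom k q) = _
    rw [Polynomial.coeToPowerSeries.algHom_apply, Algebra.algebraMap_self, PowerSeries.map_id,
      Ideal.Quotient.mkₐ_eq_mk]
    rfl
  have hsurj : Function.Surjective φ := by
    intro y
    obtain ⟨g', rfl⟩ := Ideal.Quotient.mk_surjective y
    refine ⟨g'.trunc m, ?_⟩
    rw [hφ, Ideal.Quotient.mk_eq_mk_iff_sub_mem, hI, Ideal.mem_span_singleton,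
      PowerSeries.X_pow_dvd_iff]
    intro i hi
    simp [Polynomial.coeff_coe, PowerSeries.coeff_trunc, hi]
  have hker : RingHom.ker φ = Ideal.span {(Polynomial.X : Polynomial k) ^ m} := by
    ext q
    rw [RingHom.mem_ker, hφ, Ideal.Quotient.eq_zero_iff_mem, hI, Ideal.mem_span_singleton,
      Ideal.mem_span_singleton, PowerSeries.X_pow_dvd_iff, Polynomial.X_pow_dvd_iff]
    simp [Polynomial.coeff_coe]
  let E : (Polynomial k ⧸ Ideal.span {(Polynomial.X : Polynomial k) ^ m}) ≃ₐ[k] PowerSeries k ⧸ I :=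
    (Ideal.quotientEquivAlgOfEq k hker.symm).trans (Ideal.quotientKerAlgEquivOfSurjective hsurj)
  rw [← E.toLinearEquiv.finrank_eq]
  have hX : (Polynomial.X ^ m : Polynomial k) ≠ 0 := pow_ne_zero _ Polynomial.X_ne_zero
  have h1 : Module.finrank k (AdjoinRoot (Polynomial.X ^ m : Polynomial k)) = m := by
    rw [(AdjoinRoot.powerBasis hX).finrank, AdjoinRoot.powerBasis_dim, Polynomial.natDegree_X_pow]
  exact h1

lemma finrank_quot_of_order (k : Type*) [Field k] (g : PowerSeries k) (m : ℕ)
    (hg : g.order = m) :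
    Module.finrank k (PowerSeries k ⧸ Ideal.span {g}) = m := by
  have hg0 : g ≠ 0 := by
    refine PowerSeries.order_finite_iff_ne_zero.mp ?_
    rw [hg]; exact WithTop.coe_lt_top m
  have key : PowerSeries.X ^ (g.order.lift (PowerSeries.order_finite_iff_ne_zero.mpr hg0))
      * PowerSeries.divXPowOrder g = g := by
    rw [ENat.lift_eq_toNat_of_lt_top, PowerSeries.X_pow_order_mul_divXPowOrder]
  have hl : g.order.lift (PowerSeries.order_finite_iff_ne_zero.mpr hg0) = m := by
    have : ((g.order.lift (PowerSeries.order_finite_iff_ne_zero.mpr hg0) : ℕ) : ℕ∞) = (m : ℕ∞) := by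
      rw [ENat.coe_lift, hg]
    exact_mod_cast this
  rw [hl] at key
  have hspan : Ideal.span {g} = Ideal.span {(PowerSeries.X : PowerSeries k) ^ m} := by
    rw [← key]
    exact Ideal.span_singleton_mul_right_unit
      (PowerSeries.isUnit_divided_by_X_pow_order hg0) _
  rw [hspan]
  exact finrank_quot_span_X_pow k m

lemma coeff_f0 {k : Type*} [Field k] (f h : MvPowerSeries (Fin 2) k) (u : PowerSeries k) (e : ℕ)
    (hf : f = (MvPowerSeries.X (1 : Fin 2)) ^ e * toMv u + (MvPowerSeries.X (0 : Fin 2)) * h)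
    (d₂ : ℕ) :
    MvPowerSeries.coeff (Finsupp.single (0 : Fin 2) 0 + Finsupp.single (1 : Fin 2) d₂) f
      = if e ≤ d₂ then PowerSeries.coeff (d₂ - e) u else 0 := by
  have h01 : (0 : Fin 2) ≠ 1 := by decide
  rw [hf, map_add]
  rw [Finsupp.single_zero, zero_add]
  have hA : (MvPowerSeries.coeff (Finsupp.single (1 : Fin 2) d₂))
      ((MvPowerSeries.X (1 : Fin 2)) ^ e * toMv u)
      = if e ≤ d₂ then PowerSeries.coeff (d₂ - e) u else 0 := by
    rw [MvPowerSeries.X_pow_eq, MvPowerSeries.coeff_monomial_mul]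
    by_cases hle : e ≤ d₂
    · rw [if_pos (by rwa [Finsupp.single_le_iff, Finsupp.single_eq_same]), if_pos hle, one_mul,
        ← Finsupp.single_tsub, MvPowerSeries.coeff_apply]
      simp [toMv, Finsupp.single_apply, h01.symm]
    · rw [if_neg (by rwa [Finsupp.single_le_iff, Finsupp.single_eq_same]), if_neg hle]
  have hB : (MvPowerSeries.coeff (Finsupp.single (1 : Fin 2) d₂))
      ((MvPowerSeries.X (0 : Fin 2)) * h) = 0 := by
    rw [← pow_one (MvPowerSeries.X (0 : Fin 2)), MvPowerSeries.X_pow_eq,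
      MvPowerSeries.coeff_monomial_mul, if_neg]
    rw [Finsupp.single_le_iff, Finsupp.single_eq_of_ne h01]
    omega
  rw [hA, hB, add_zero]

lemma order_main (k : Type*) [Field k] (p : ℕ) (hp : 1 < p)
    (f h : MvPowerSeries (Fin 2) k) (u : PowerSeries k) (e : ℕ)
    (he : 1 ≤ e) (hu : IsUnit u)
    (hf : f = (MvPowerSeries.X (1 : Fin 2)) ^ e * toMv u + (MvPowerSeries.X (0 : Fin 2)) * h)
    (a₁ a₂ : PowerSeries k) (ha₂ : IsUnit a₂)
    (k₁ k₂ : ℕ) (hk₁ : 1 ≤ k₁) (hk₂ : 1 ≤ k₂)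
    (n : ℕ) (hn : e * k₂ < p ^ n) :
    (substPair ((a₁ * PowerSeries.X ^ k₁) ^ p ^ n) (a₂ * PowerSeries.X ^ k₂) f).order
      = (e * k₂ : ℕ) := by
  set m := e * k₂ with hm
  have hcoeff : ∀ j d₁ d₂ : ℕ,
      PowerSeries.coeff j (((a₁ * PowerSeries.X ^ k₁) ^ p ^ n) ^ d₁
          * (a₂ * PowerSeries.X ^ k₂) ^ d₂)
        = if k₁ * (p ^ n * d₁) + k₂ * d₂ ≤ j then
            PowerSeries.coeff (j - (k₁ * (p ^ n * d₁) + k₂ * d₂)) (a₁ ^ (p ^ n * d₁) * a₂ ^ d₂)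
          else 0 := by
    intro j d₁ d₂
    have hrw : ((a₁ * PowerSeries.X ^ k₁) ^ p ^ n) ^ d₁ * (a₂ * PowerSeries.X ^ k₂) ^ d₂
        = (a₁ ^ (p ^ n * d₁) * a₂ ^ d₂) * PowerSeries.X ^ (k₁ * (p ^ n * d₁) + k₂ * d₂) := by
      rw [← pow_mul]
      ring
    rw [hrw, PowerSeries.coeff_mul_X_pow']
  -- the generic term analysis
  have hterm : ∀ j ≤ m, ∀ d₁ d₂ : ℕ, (d₁ ≠ 0 ∨ d₂ ≠ e ∨ j ≠ m) →
      (MvPowerSeries.coeff (Finsupp.single (0 : Fin 2) d₁ + Finsupp.single (1 : Fin 2) d₂) f)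
        * PowerSeries.coeff j (((a₁ * PowerSeries.X ^ k₁) ^ p ^ n) ^ d₁
            * (a₂ * PowerSeries.X ^ k₂) ^ d₂) = 0 := by
    intro j hj d₁ d₂ hcase
    rcases Nat.eq_zero_or_pos d₁ with h1 | h1
    · subst h1
      rw [coeff_f0 f h u e hf d₂, hcoeff]
      simp only [mul_zero, zero_add]
      by_cases hle : e ≤ d₂
      · rcases Nat.lt_or_ge j (k₂ * d₂) with hlt | hge
        · rw [if_pos hle, if_neg (by omega), mul_zero]
        · -- k₂ * d₂ ≤ j ≤ m = e * k₂ and e ≤ d₂ force d₂ = e and j = m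
          have hle2 : k₂ * d₂ ≤ k₂ * e := by
            calc k₂ * d₂ ≤ j := hge
              _ ≤ m := hj
              _ = k₂ * e := by rw [hm, mul_comm]
          have hd2 : d₂ = e :=
            le_antisymm (Nat.le_of_mul_le_mul_left hle2 (by omega)) hle
          subst hd2
          have hjm : j = m := le_antisymm hj (by rw [hm, mul_comm]; exact hge)
          rcases hcase with h' | h' | h'
          · exact absurd rfl h'
          · exact absurd rfl h'
          · exact absurd hjm h'
      · rw [if_neg hle, zero_mul]
    · have hbig : ¬ (k₁ * (p ^ n * d₁) + k₂ * d₂ ≤ j) := by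
        have h2 : p ^ n ≤ p ^ n * d₁ := Nat.le_mul_of_pos_right _ h1
        have h3 : p ^ n * d₁ ≤ k₁ * (p ^ n * d₁) := Nat.le_mul_of_pos_left _ (by omega)
        omega
      rw [hcoeff, if_neg hbig, mul_zero]
  have hlow : ∀ j < m, PowerSeries.coeff j
      (substPair ((a₁ * PowerSeries.X ^ k₁) ^ p ^ n) (a₂ * PowerSeries.X ^ k₂) f) = 0 := by
    intro j hj
    simp only [substPair, PowerSeries.coeff_mk]
    apply Finset.sum_eq_zero
    rintro ⟨d₁, d₂⟩ _
    exact hterm j (le_of_lt hj) d₁ d₂ (Or.inr (Or.inr (by omega)))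
  have hem : e ≤ m := by
    rw [hm]; exact Nat.le_mul_of_pos_right _ (by omega)
  have htop : PowerSeries.coeff m
      (substPair ((a₁ * PowerSeries.X ^ k₁) ^ p ^ n) (a₂ * PowerSeries.X ^ k₂) f)
      = PowerSeries.coeff 0 u * (PowerSeries.constantCoeff a₂) ^ e := by
    simp only [substPair, PowerSeries.coeff_mk]
    rw [Finset.sum_eq_single_of_mem ((0 : ℕ), e)]
    · rw [coeff_f0 f h u e hf e, if_pos le_rfl, Nat.sub_self, hcoeff]
      simp only [mul_zero, zero_add, pow_zero, one_mul]
      rw [if_pos (by rw [hm, mul_comm])]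
      have h0 : m - k₂ * e = 0 := by rw [hm, mul_comm]; omega
      rw [h0]
      simp [PowerSeries.coeff_zero_eq_constantCoeff, map_pow]
    · simp only [Finset.mem_product, Finset.mem_range]
      omega
    · rintro ⟨d₁, d₂⟩ _ hne
      apply hterm m le_rfl d₁ d₂
      by_cases h1 : d₁ = 0
      · subst h1
        exact Or.inr (Or.inl (by simpa [Prod.ext_iff] using hne))
      · exact Or.inl h1
  rw [PowerSeries.order_eq_nat]
  refine ⟨?_, hlow⟩
  rw [htop]
  have hu0 : PowerSeries.coeff 0 u ≠ 0 := by
    rw [PowerSeries.coeff_zero_eq_constantCoeff]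
    exact (hu.map (PowerSeries.constantCoeff)).ne_zero
  have ha20 : PowerSeries.constantCoeff a₂ ≠ 0 := (ha₂.map (PowerSeries.constantCoeff)).ne_zero
  exact mul_ne_zero hu0 (pow_ne_zero _ ha20)

/-- if `t₁ ∤ f` and `f = t₂^e u(t₂) + t₁ h(t₁,t₂)` with `u` a unit and `e ≥ 1`,
and `α₁ = a₁ u^{k₁}`, `α₂ = a₂ u^{k₂}` with `a₁, a₂` units and `k₁, k₂ ≥ 1`, then for all
sufficiently large `n` the `u`-adic valuation of `f(α₁^{p^n}, α₂)` equals `e·k₂`, and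
`dim_k k[[u]]/(f(α₁^{p^n},α₂)) = e·k₂` is bounded independently of `n`. -/
theorem stmt0 (k : Type*) [Field k] (p : ℕ) [Fact p.Prime] [CharP k p]
    (f h : MvPowerSeries (Fin 2) k) (u : PowerSeries k) (e : ℕ)
    (he : 1 ≤ e) (hu : IsUnit u)
    (hft : ¬ (MvPowerSeries.X (0 : Fin 2) ∣ f))
    (hf : f = (MvPowerSeries.X (1 : Fin 2)) ^ e * toMv u + (MvPowerSeries.X (0 : Fin 2)) * h)
    (a₁ a₂ : PowerSeries k) (ha₁ : IsUnit a₁) (ha₂ : IsUnit a₂)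
    (k₁ k₂ : ℕ) (hk₁ : 1 ≤ k₁) (hk₂ : 1 ≤ k₂) :
    ∃ N : ℕ, ∀ n ≥ N,
      (substPair ((a₁ * PowerSeries.X ^ k₁) ^ p ^ n) (a₂ * PowerSeries.X ^ k₂) f).order
          = (e * k₂ : ℕ) ∧
      Module.finrank k
          (PowerSeries k ⧸ Ideal.span
            {substPair ((a₁ * PowerSeries.X ^ k₁) ^ p ^ n) (a₂ * PowerSeries.X ^ k₂) f})
          = e * k₂ := by
  have hp1 : 1 < p := (Fact.out : p.Prime).one_lt
  refine ⟨e * k₂ + 1, fun n hn => ?_⟩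
  have hlt : e * k₂ < p ^ n := lt_of_lt_of_le (by omega : e * k₂ < n) (Nat.lt_pow_self (n := n) hp1).le
  have horder := order_main k p hp1 f h u e he hu hf a₁ a₂ ha₂ k₁ k₂ hk₁ hk₂ n hlt
  exact ⟨horder, finrank_quot_of_order k _ _ horder⟩
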